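/- Let X be a connected, locally connected, locally compact Hausdorff topological space. Define the end space Ends(X) as the set of functions e assigning to each compact subset K ⊆ X a connected component e(K) of X ∖ K whose closure in X is not compact, subject to the compatibility condition that e(K′) ⊆ e(K) whenever K ⊆ K′; topologize Ends(X) as a subspace of the product ∏_{K compact} (Set X), where each factor Set X carries the discrete topology. Then Ends(X) is a compact, Hausdorff, totally disconnected topological space; if moreover X is second countable, then Ends(X) is second countable. -/

import Mathlib

open Topology

variable (X : Type*) [TopologicalSpace X]

/-- `C` is a connected component of `X \ K` whose closure in `X` is not compact. -/
def IsUnboundedComponent (K C : Set X) : Prop :=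
  (∃ x ∈ Kᶜ, C = connectedComponentIn Kᶜ x) ∧ ¬ IsCompact (closure C)

/-- The space of ends of `X`: compatible assignments, to each compact `K ⊆ X`, of an
unbounded connected component of `X \ K`. -/
def Ends : Type _ :=
  {e : {K : Set X // IsCompact K} → Set X //
    (∀ K : {K : Set X // IsCompact K}, IsUnboundedComponent X K.1 (e K)) ∧
    (∀ K K' : {K : Set X // IsCompact K}, K.1 ⊆ K'.1 → e K' ⊆ e K)}

/-- Topologize `Ends X` as a subspace of the product `∏_{K compact} (Set X)`, where each
factor `Set X` carries the discrete topology. -/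
instance : TopologicalSpace (Ends X) :=
  TopologicalSpace.induced (Subtype.val : Ends X → ({K : Set X // IsCompact K} → Set X))
    (@Pi.topologicalSpace _ (fun _ => Set X) (fun _ => ⊥))

variable {X}

/-- There are only finitely many unbounded components of the complement of a compact set. -/
theorem unboundedComponent_finite [ConnectedSpace X] [LocallyConnectedSpace X]
    [LocallyCompactSpace X] [T2Space X] {K : Set X} (hK : IsCompact K) :
    {C : Set X | IsUnboundedComponent X K C}.Finite := by
  rcases Set.eq_empty_or_nonempty K with rfl | hKne
  · refine Set.Finite.subset (Set.finite_singleton (Set.univ : Set X)) ?_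
    rintro C ⟨⟨x, -, rfl⟩, -⟩
    simp [Set.compl_empty, connectedComponentIn_univ,
      PreconnectedSpace.connectedComponent_eq_univ]
  obtain ⟨K', hK'c, hKK'⟩ := exists_compact_superset hK
  have hLc : IsCompact (K' \ interior K') := hK'c.diff isOpen_interior
  have hKco : IsOpen Kᶜ := hK.isClosed.isOpen_compl
  have hcov : K' \ interior K' ⊆ ⋃ y : X, connectedComponentIn Kᶜ y := by
    intro y hy
    have hyK : y ∈ Kᶜ := fun hyK => hy.2 (hKK' hyK)
    exact Set.mem_iUnion.2 ⟨y, mem_connectedComponentIn hyK⟩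
  obtain ⟨t, ht⟩ := hLc.elim_finite_subcover _ (fun y => hKco.connectedComponentIn) hcov
  refine Set.Finite.subset (t.finite_toSet.image (fun y => connectedComponentIn Kᶜ y)) ?_
  rintro C ⟨⟨x, hx, rfl⟩, hCnc⟩
  have hCo : IsOpen (connectedComponentIn Kᶜ x) := hKco.connectedComponentIn
  have hCconn : IsPreconnected (connectedComponentIn Kᶜ x) := isPreconnected_connectedComponentIn
  have hCsub : connectedComponentIn Kᶜ x ⊆ Kᶜ := connectedComponentIn_subset _ _
  have hK'cl : IsClosed K' := hK'c.isClosed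
  -- the component is not contained in `K'`
  have h1 : (connectedComponentIn Kᶜ x ∩ K'ᶜ).Nonempty := by
    by_contra h
    rw [Set.not_nonempty_iff_eq_empty, ← Set.disjoint_iff_inter_eq_empty,
      Set.disjoint_compl_right_iff_subset] at h
    exact hCnc (hK'c.of_isClosed_subset isClosed_closure (closure_minimal h hK'cl))
  -- its closure meets `K`
  have h2 : (closure (connectedComponentIn Kᶜ x) ∩ K).Nonempty := by
    by_contra h
    rw [Set.not_nonempty_iff_eq_empty, ← Set.disjoint_iff_inter_eq_empty] at h
    have hclsub : closure (connectedComponentIn Kᶜ x) ⊆ Kᶜ := h.subset_compl_right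
    have hcl : closure (connectedComponentIn Kᶜ x) ⊆ connectedComponentIn Kᶜ x :=
      hCconn.closure.subset_connectedComponentIn
        (subset_closure (mem_connectedComponentIn hx)) hclsub
    have hclopen : IsClopen (connectedComponentIn Kᶜ x) :=
      ⟨isClosed_of_closure_subset hcl, hCo⟩
    obtain ⟨k, hk⟩ := hKne
    exact (hclopen.eq_univ ⟨x, mem_connectedComponentIn hx⟩ ▸ hCsub) (Set.mem_univ k) hk
  -- it meets the interior of `K'`
  have h3 : (connectedComponentIn Kᶜ x ∩ interior K').Nonempty := by
    obtain ⟨y, hyc, hyK⟩ := h2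
    obtain ⟨z, hz1, hz2⟩ := mem_closure_iff.mp hyc (interior K') isOpen_interior (hKK' hyK)
    exact ⟨z, hz2, hz1⟩
  -- hence it meets `K' \ interior K'`
  have h4 : (connectedComponentIn Kᶜ x ∩ (K' \ interior K')).Nonempty := by
    by_contra h
    rw [Set.not_nonempty_iff_eq_empty] at h
    have hsub : connectedComponentIn Kᶜ x ⊆ interior K' ∪ K'ᶜ := by
      intro z hz
      by_cases hzK' : z ∈ K'
      · by_cases hzi : z ∈ interior K'
        · exact Or.inl hzi
        · exact absurd h (Set.nonempty_iff_ne_empty.mp ⟨z, hz, hzK', hzi⟩)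
      · exact Or.inr hzK'
    have hdisj : Disjoint (interior K') K'ᶜ :=
      Set.disjoint_compl_right_iff_subset.mpr interior_subset
    rcases hCconn.subset_or_subset isOpen_interior hK'cl.isOpen_compl hdisj hsub with h5 | h5
    · obtain ⟨z, hz1, hz2⟩ := h1
      exact hz2 (interior_subset (h5 hz1))
    · obtain ⟨z, hz1, hz2⟩ := h3
      exact (h5 hz1) (interior_subset hz2)
  obtain ⟨z, hzC, hzL⟩ := h4
  obtain ⟨y, hyt, hzy⟩ := Set.mem_iUnion₂.mp (ht hzL)
  exact ⟨y, hyt, (connectedComponentIn_eq hzy).trans (connectedComponentIn_eq hzC).symm⟩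

theorem Ends.val_nonempty (e : Ends X) (K : {K : Set X // IsCompact K}) :
    (e.1 K).Nonempty := by
  by_contra h
  rw [Set.not_nonempty_iff_eq_empty] at h
  exact (e.2.1 K).2 (by rw [h, closure_empty]; exact isCompact_empty)

/-- The value of an end on a compact set is determined by its value on any larger compact set. -/
theorem Ends.det (e e' : Ends X) (S T : {K : Set X // IsCompact K}) (hST : S.1 ⊆ T.1)
    (h : e.1 T = e'.1 T) : e.1 S = e'.1 S := by
  obtain ⟨z, hz⟩ := Ends.val_nonempty e T
  have hz1 : z ∈ e.1 S := e.2.2 S T hST hz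
  have hz2 : z ∈ e'.1 S := e'.2.2 S T hST (h ▸ hz)
  obtain ⟨x, hx, hex⟩ := (e.2.1 S).1
  obtain ⟨x', hx', hex'⟩ := (e'.2.1 S).1
  rw [hex] at hz1 ⊢
  rw [hex'] at hz2 ⊢
  rw [connectedComponentIn_eq hz1, connectedComponentIn_eq hz2]

/-- Richards's theorem, point-set form: for `X` connected, locally connected, locally
compact and Hausdorff, the end space `Ends X` is compact, Hausdorff and totally
disconnected; if `X` is moreover second countable, so is `Ends X`. -/
theorem ends_compact_t2_totallyDisconnected [ConnectedSpace X] [LocallyConnectedSpace X]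
    [LocallyCompactSpace X] [T2Space X] :
    CompactSpace (Ends X) ∧ T2Space (Ends X) ∧ TotallyDisconnectedSpace (Ends X) ∧
      (SecondCountableTopology X → SecondCountableTopology (Ends X)) := by
  letI tS : TopologicalSpace (Set X) := ⊥
  haveI : DiscreteTopology (Set X) := ⟨rfl⟩
  letI tP : TopologicalSpace ({K : Set X // IsCompact K} → Set X) := Pi.topologicalSpace
  have hemb : IsEmbedding (Subtype.val : Ends X → ({K : Set X // IsCompact K} → Set X)) :=
    ⟨⟨rfl⟩, Subtype.val_injective⟩
  have hrange : Set.range (Subtype.val : Ends X → ({K : Set X // IsCompact K} → Set X)) =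
      {f | (∀ K : {K : Set X // IsCompact K}, IsUnboundedComponent X K.1 (f K)) ∧
        (∀ K K' : {K : Set X // IsCompact K}, K.1 ⊆ K'.1 → f K' ⊆ f K)} := by
    ext f
    constructor
    · rintro ⟨e, rfl⟩; exact e.2
    · intro h; exact ⟨⟨f, h⟩, rfl⟩
  have hEclosed : IsClosed {f : {K : Set X // IsCompact K} → Set X |
      (∀ K : {K : Set X // IsCompact K}, IsUnboundedComponent X K.1 (f K)) ∧
      (∀ K K' : {K : Set X // IsCompact K}, K.1 ⊆ K'.1 → f K' ⊆ f K)} := by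
    have h1 : IsClosed {f : {K : Set X // IsCompact K} → Set X |
        ∀ K : {K : Set X // IsCompact K}, IsUnboundedComponent X K.1 (f K)} := by
      have : {f : {K : Set X // IsCompact K} → Set X |
          ∀ K : {K : Set X // IsCompact K}, IsUnboundedComponent X K.1 (f K)} =
          ⋂ K : {K : Set X // IsCompact K},
            (fun f : {K : Set X // IsCompact K} → Set X => f K) ⁻¹'
              {C | IsUnboundedComponent X K.1 C} := by
        ext f; simp
      rw [this]
      exact isClosed_iInter fun K => (isClosed_discrete _).preimage (continuous_apply K)
    have h2 : IsClosed {f : {K : Set X // IsCompact K} → Set X |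
        ∀ K K' : {K : Set X // IsCompact K}, K.1 ⊆ K'.1 → f K' ⊆ f K} := by
      have : {f : {K : Set X // IsCompact K} → Set X |
          ∀ K K' : {K : Set X // IsCompact K}, K.1 ⊆ K'.1 → f K' ⊆ f K} =
          ⋂ (K : {K : Set X // IsCompact K}) (K' : {K : Set X // IsCompact K}),
            {f : {K : Set X // IsCompact K} → Set X | K.1 ⊆ K'.1 → f K' ⊆ f K} := by
        ext f; simp
      rw [this]
      refine isClosed_iInter fun K => isClosed_iInter fun K' => ?_
      by_cases h : K.1 ⊆ K'.1
      · have : {f : {K : Set X // IsCompact K} → Set X | K.1 ⊆ K'.1 → f K' ⊆ f K} =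
            (fun f : {K : Set X // IsCompact K} → Set X => (f K', f K)) ⁻¹'
              {p : Set X × Set X | p.1 ⊆ p.2} := by
          ext f; simp [h]
        rw [this]
        exact (isClosed_discrete _).preimage
          ((continuous_apply K').prodMk (continuous_apply K))
      · have : {f : {K : Set X // IsCompact K} → Set X | K.1 ⊆ K'.1 → f K' ⊆ f K} =
            Set.univ := by
          ext f; simp [h]
        rw [this]; exact isClosed_univ
    exact h1.inter h2
  have hEcomp : IsCompact {f : {K : Set X // IsCompact K} → Set X |
      (∀ K : {K : Set X // IsCompact K}, IsUnboundedComponent X K.1 (f K)) ∧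
      (∀ K K' : {K : Set X // IsCompact K}, K.1 ⊆ K'.1 → f K' ⊆ f K)} := by
    refine IsCompact.of_isClosed_subset
      (isCompact_univ_pi fun K => (unboundedComponent_finite K.2).isCompact) hEclosed ?_
    intro f hf K _
    exact hf.1 K
  have hcs : CompactSpace (Ends X) := by
    refine ⟨?_⟩
    exact hemb.isCompact_iff.mpr (by convert hEcomp using 1; rw [← hrange]; exact Set.image_univ)
  refine ⟨hcs, hemb.t2Space, hemb.isTotallyDisconnected_range.mp
    (isTotallyDisconnected_of_totallyDisconnectedSpace _), ?_⟩
  intro hsc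
  haveI : SigmaCompactSpace X := inferInstance
  let 𝒦 : CompactExhaustion X := CompactExhaustion.choice X
  set U : ∀ n : ℕ, Set X → Set (Ends X) :=
    fun n C => {e : Ends X | e.1 ⟨𝒦 n, 𝒦.isCompact n⟩ = C} with hU
  set B : Set (Set (Ends X)) :=
    ⋃ n : ℕ, (fun C => U n C) '' {C | IsUnboundedComponent X (𝒦 n) C} with hB
  have hBcount : B.Countable :=
    Set.countable_iUnion fun n =>
      ((unboundedComponent_finite (𝒦.isCompact n)).image _).countable
  refine TopologicalSpace.IsTopologicalBasis.secondCountableTopology ?_ hBcount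
  refine TopologicalSpace.isTopologicalBasis_of_isOpen_of_nhds ?_ ?_
  · rintro u hu
    simp only [hB, Set.mem_iUnion, Set.mem_image] at hu
    obtain ⟨n, C, -, rfl⟩ := hu
    have : U n C = ((fun e : Ends X => e.1 ⟨𝒦 n, 𝒦.isCompact n⟩)) ⁻¹' {C} := rfl
    rw [this]
    exact (isOpen_discrete {C}).preimage ((continuous_apply _).comp hemb.continuous)
  · intro e u heu hu
    rw [isOpen_induced_iff] at hu
    obtain ⟨V, hV, rfl⟩ := hu
    obtain ⟨I, w, hw, hIw⟩ := isOpen_pi_iff.mp hV e.1 heu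
    have hIc : IsCompact (⋃ i ∈ I, i.1) :=
      I.isCompact_biUnion fun i _ => i.2
    obtain ⟨n, hn⟩ := 𝒦.exists_superset_of_isCompact hIc
    refine ⟨U n (e.1 ⟨𝒦 n, 𝒦.isCompact n⟩), ?_, rfl, ?_⟩
    · simp only [hB, Set.mem_iUnion, Set.mem_image]
      exact ⟨n, e.1 ⟨𝒦 n, 𝒦.isCompact n⟩, e.2.1 ⟨𝒦 n, 𝒦.isCompact n⟩, rfl⟩
    · intro e' he'
      refine hIw ?_
      intro i hi
      have hsub : i.1 ⊆ 𝒦 n :=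
        (Set.subset_biUnion_of_mem (u := fun i : {K : Set X // IsCompact K} => i.1) hi).trans hn
      have : e'.1 i = e.1 i := Ends.det e' e i ⟨𝒦 n, 𝒦.isCompact n⟩ hsub he'
      show e'.1 i ∈ w i
      rw [this]
      exact (hw i hi).2
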